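/- Let n ≥ 2 be an integer and 0 < β ≤ 1. There is a constant C, depending only on n and β, such that for every τ ∈ (0,1]: ∫₀¹ ∫₀^τ ∫₀^τ t^{2n−5+β} · (s₁ + s₂ + t²)^{−n} dt ds₂ ds₁ ≤ C · τ^{β/2}. -/

import Mathlib

open MeasureTheory

lemma integrableOn_rpow_Ioo {r : ℝ} (hr : -1 < r) (τ : ℝ) :
    IntegrableOn (fun t : ℝ => t ^ r) (Set.Ioo 0 τ) := by
  have h := (intervalIntegral.intervalIntegrable_rpow' (a := 0) (b := τ) hr).1
  exact h.mono_set Set.Ioo_subset_Ioc_self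

lemma integral_rpow_Ioo {r : ℝ} (hr : -1 < r) {τ : ℝ} (hτ : 0 < τ) :
    ∫ t in Set.Ioo (0:ℝ) τ, t ^ r = τ ^ (r+1) / (r+1) := by
  rw [← integral_Ioc_eq_integral_Ioo, ← intervalIntegral.integral_of_le hτ.le,
    integral_rpow (Or.inl hr)]
  rw [Real.zero_rpow (by linarith : r + 1 ≠ 0)]
  ring

lemma ptwise (n : ℕ) (hn : 2 ≤ n) (β : ℝ) (hβ0 : 0 < β) (hβ1 : β ≤ 1)
    {s1 s2 t : ℝ} (h1 : 0 < s1) (h2 : 0 < s2) (ht : 0 < t) :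
    t ^ (2 * (n : ℝ) - 5 + β) / (s1 + s2 + t ^ 2) ^ n ≤
      s1 ^ (β/8 - 1) * s2 ^ (β/8 - 1) * t ^ (β/2 - 1) := by
  have hn2 : (2:ℝ) ≤ (n:ℝ) := by exact_mod_cast hn
  have hS : 0 < s1 + s2 + t ^ 2 := by positivity
  have key : s1 ^ (1 - β/8) * s2 ^ (1 - β/8) * t ^ (2*(n:ℝ) - 4 + β/2)
      ≤ (s1 + s2 + t ^ 2) ^ n := by
    have eS : (s1 + s2 + t ^ 2) ^ n = (s1 + s2 + t ^ 2) ^ (1 - β/8) *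
        (s1 + s2 + t ^ 2) ^ (1 - β/8) * (s1 + s2 + t ^ 2) ^ ((n:ℝ) - 2 + β/4) := by
      rw [← Real.rpow_natCast (s1 + s2 + t ^ 2) n, ← Real.rpow_add hS, ← Real.rpow_add hS]
      congr 1
      ring
    rw [eS]
    have hA : s1 ^ (1 - β/8) ≤ (s1 + s2 + t ^ 2) ^ (1 - β/8) :=
      Real.rpow_le_rpow h1.le (by nlinarith [sq_nonneg t]) (by linarith)
    have hB : s2 ^ (1 - β/8) ≤ (s1 + s2 + t ^ 2) ^ (1 - β/8) :=
      Real.rpow_le_rpow h2.le (by nlinarith [sq_nonneg t]) (by linarith)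
    have hC : t ^ (2*(n:ℝ) - 4 + β/2) ≤ (s1 + s2 + t ^ 2) ^ ((n:ℝ) - 2 + β/4) := by
      have : t ^ (2*(n:ℝ) - 4 + β/2) = (t ^ 2) ^ ((n:ℝ) - 2 + β/4) := by
        rw [← Real.rpow_natCast t 2, ← Real.rpow_mul ht.le]
        norm_num
        ring_nf
      rw [this]
      exact Real.rpow_le_rpow (by positivity) (by linarith) (by linarith)
    have hApos : (0:ℝ) ≤ s1 ^ (1 - β/8) := Real.rpow_nonneg h1.le _
    have hBpos : (0:ℝ) ≤ s2 ^ (1 - β/8) := Real.rpow_nonneg h2.le _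
    have hCpos : (0:ℝ) ≤ t ^ (2*(n:ℝ) - 4 + β/2) := Real.rpow_nonneg ht.le _
    gcongr
  have hden : 0 < s1 ^ (1 - β/8) * s2 ^ (1 - β/8) * t ^ (2*(n:ℝ) - 4 + β/2) := by
    have := Real.rpow_pos_of_pos h1 (1 - β/8)
    have := Real.rpow_pos_of_pos h2 (1 - β/8)
    have := Real.rpow_pos_of_pos ht (2*(n:ℝ) - 4 + β/2)
    positivity
  have step : t ^ (2 * (n : ℝ) - 5 + β) / (s1 + s2 + t ^ 2) ^ n ≤
      t ^ (2 * (n : ℝ) - 5 + β) /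
        (s1 ^ (1 - β/8) * s2 ^ (1 - β/8) * t ^ (2*(n:ℝ) - 4 + β/2)) := by
    gcongr
  refine step.trans_eq ?_
  rw [show β/2 - 1 = (2*(n:ℝ) - 5 + β) - (2*(n:ℝ) - 4 + β/2) by ring,
    Real.rpow_sub ht, show β/8 - 1 = -(1 - β/8) by ring,
    Real.rpow_neg h1.le, Real.rpow_neg h2.le]
  field_simp

/-- the model integral
`∫₀¹∫₀^τ∫₀^τ t^{2n−5+β} (s₁+s₂+t²)^{-n} dt ds₂ ds₁` is bounded by `C · τ^{β/2}`,
uniformly for `τ ∈ (0,1]`. -/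
theorem model_integral_small_ball (n : ℕ) (hn : 2 ≤ n)
    (β : ℝ) (hβ0 : 0 < β) (hβ1 : β ≤ 1) :
    ∃ C : ℝ, 0 < C ∧ ∀ τ : ℝ, 0 < τ → τ ≤ 1 →
      (∫ s1 in Set.Ioo (0 : ℝ) 1, ∫ s2 in Set.Ioo (0 : ℝ) τ, ∫ t in Set.Ioo (0 : ℝ) τ,
          t ^ (2 * (n : ℝ) - 5 + β) / (s1 + s2 + t ^ 2) ^ n)
        ≤ C * τ ^ (β / 2) := by
  have hδ : -1 < β/8 - 1 := by linarith
  have hb2 : -1 < β/2 - 1 := by linarith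
  refine ⟨(8/β) * (8/β) * (2/β), by positivity, ?_⟩
  intro τ hτ0 hτ1
  have K2 : ∫ t in Set.Ioo (0:ℝ) τ, t ^ (β/2 - 1) = τ ^ (β/2) / (β/2) := by
    have := integral_rpow_Ioo hb2 hτ0
    simpa using this
  have K1 : ∫ s in Set.Ioo (0:ℝ) τ, s ^ (β/8 - 1) = τ ^ (β/8) / (β/8) := by
    have := integral_rpow_Ioo hδ hτ0
    simpa using this
  have K0 : ∫ s in Set.Ioo (0:ℝ) 1, s ^ (β/8 - 1) = 1 / (β/8) := by
    have := integral_rpow_Ioo hδ (one_pos)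
    simpa [Real.one_rpow] using this
  -- layer t
  have step_t : ∀ s1 ∈ Set.Ioo (0:ℝ) 1, ∀ s2 ∈ Set.Ioo (0:ℝ) τ,
      (∫ t in Set.Ioo (0:ℝ) τ, t ^ (2 * (n : ℝ) - 5 + β) / (s1 + s2 + t ^ 2) ^ n)
        ≤ (s1 ^ (β/8 - 1) * s2 ^ (β/8 - 1)) * (τ ^ (β/2) / (β/2)) := by
    intro s1 hs1 s2 hs2
    have hInt : Integrable (fun t : ℝ => (s1 ^ (β/8 - 1) * s2 ^ (β/8 - 1)) * t ^ (β/2 - 1))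
        (volume.restrict (Set.Ioo 0 τ)) := (integrableOn_rpow_Ioo hb2 τ).const_mul _
    calc (∫ t in Set.Ioo (0:ℝ) τ, t ^ (2 * (n : ℝ) - 5 + β) / (s1 + s2 + t ^ 2) ^ n)
        ≤ ∫ t in Set.Ioo (0:ℝ) τ, (s1 ^ (β/8 - 1) * s2 ^ (β/8 - 1)) * t ^ (β/2 - 1) := by
          refine integral_mono_of_nonneg ?_ hInt ?_
          · refine (ae_restrict_iff' measurableSet_Ioo).mpr (ae_of_all _ fun t ht => ?_)
            have h0 : 0 < s1 + s2 + t ^ 2 := by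
              nlinarith [hs1.1, hs2.1, sq_nonneg t]
            have ht0 := ht.1
            positivity
          · refine (ae_restrict_iff' measurableSet_Ioo).mpr (ae_of_all _ fun t ht => ?_)
            have := ptwise n hn β hβ0 hβ1 hs1.1 hs2.1 ht.1
            calc t ^ (2 * (n : ℝ) - 5 + β) / (s1 + s2 + t ^ 2) ^ n
                ≤ s1 ^ (β/8 - 1) * s2 ^ (β/8 - 1) * t ^ (β/2 - 1) := this
              _ = (s1 ^ (β/8 - 1) * s2 ^ (β/8 - 1)) * t ^ (β/2 - 1) := by ring
      _ = (s1 ^ (β/8 - 1) * s2 ^ (β/8 - 1)) * (τ ^ (β/2) / (β/2)) := by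
          rw [integral_const_mul, K2]
  -- layer s2
  have step_s2 : ∀ s1 ∈ Set.Ioo (0:ℝ) 1,
      (∫ s2 in Set.Ioo (0:ℝ) τ, ∫ t in Set.Ioo (0:ℝ) τ,
          t ^ (2 * (n : ℝ) - 5 + β) / (s1 + s2 + t ^ 2) ^ n)
        ≤ s1 ^ (β/8 - 1) * ((τ ^ (β/8) / (β/8)) * (τ ^ (β/2) / (β/2))) := by
    intro s1 hs1
    have hInt : Integrable
        (fun s2 : ℝ => (s1 ^ (β/8 - 1) * s2 ^ (β/8 - 1)) * (τ ^ (β/2) / (β/2)))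
        (volume.restrict (Set.Ioo 0 τ)) :=
      ((integrableOn_rpow_Ioo hδ τ).const_mul _).mul_const _
    calc (∫ s2 in Set.Ioo (0:ℝ) τ, ∫ t in Set.Ioo (0:ℝ) τ,
          t ^ (2 * (n : ℝ) - 5 + β) / (s1 + s2 + t ^ 2) ^ n)
        ≤ ∫ s2 in Set.Ioo (0:ℝ) τ,
            (s1 ^ (β/8 - 1) * s2 ^ (β/8 - 1)) * (τ ^ (β/2) / (β/2)) := by
          refine integral_mono_of_nonneg ?_ hInt ?_
          · refine (ae_restrict_iff' measurableSet_Ioo).mpr (ae_of_all _ fun s2 hs2 => ?_)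
            refine setIntegral_nonneg measurableSet_Ioo fun t ht => ?_
            have h0 : 0 < s1 + s2 + t ^ 2 := by
              nlinarith [hs1.1, hs2.1, sq_nonneg t]
            have ht0 := ht.1
            positivity
          · exact (ae_restrict_iff' measurableSet_Ioo).mpr
              (ae_of_all _ fun s2 hs2 => step_t s1 hs1 s2 hs2)
      _ = s1 ^ (β/8 - 1) * ((τ ^ (β/8) / (β/8)) * (τ ^ (β/2) / (β/2))) := by
          rw [integral_mul_const, integral_const_mul, K1]
          ring
  -- layer s1
  have step_s1 :
      (∫ s1 in Set.Ioo (0 : ℝ) 1, ∫ s2 in Set.Ioo (0 : ℝ) τ, ∫ t in Set.Ioo (0 : ℝ) τ,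
          t ^ (2 * (n : ℝ) - 5 + β) / (s1 + s2 + t ^ 2) ^ n)
        ≤ (1 / (β/8)) * ((τ ^ (β/8) / (β/8)) * (τ ^ (β/2) / (β/2))) := by
    have hInt : Integrable
        (fun s1 : ℝ => s1 ^ (β/8 - 1) * ((τ ^ (β/8) / (β/8)) * (τ ^ (β/2) / (β/2))))
        (volume.restrict (Set.Ioo 0 1)) :=
      (integrableOn_rpow_Ioo hδ 1).mul_const _
    calc (∫ s1 in Set.Ioo (0 : ℝ) 1, ∫ s2 in Set.Ioo (0 : ℝ) τ, ∫ t in Set.Ioo (0 : ℝ) τ,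
          t ^ (2 * (n : ℝ) - 5 + β) / (s1 + s2 + t ^ 2) ^ n)
        ≤ ∫ s1 in Set.Ioo (0:ℝ) 1,
            s1 ^ (β/8 - 1) * ((τ ^ (β/8) / (β/8)) * (τ ^ (β/2) / (β/2))) := by
          refine integral_mono_of_nonneg ?_ hInt ?_
          · refine (ae_restrict_iff' measurableSet_Ioo).mpr (ae_of_all _ fun s1 hs1 => ?_)
            refine setIntegral_nonneg measurableSet_Ioo fun s2 hs2 => ?_
            refine setIntegral_nonneg measurableSet_Ioo fun t ht => ?_
            have h0 : 0 < s1 + s2 + t ^ 2 := by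
              nlinarith [hs1.1, hs2.1, sq_nonneg t]
            have ht0 := ht.1
            positivity
          · exact (ae_restrict_iff' measurableSet_Ioo).mpr
              (ae_of_all _ fun s1 hs1 => step_s2 s1 hs1)
      _ = (1 / (β/8)) * ((τ ^ (β/8) / (β/8)) * (τ ^ (β/2) / (β/2))) := by
          rw [integral_mul_const, K0]
  refine step_s1.trans ?_
  have hτ8 : τ ^ (β/8) ≤ 1 := Real.rpow_le_one hτ0.le hτ1 (by positivity)
  have hτ2 : (0:ℝ) ≤ τ ^ (β/2) := Real.rpow_nonneg hτ0.le _
  have hτ80 : (0:ℝ) ≤ τ ^ (β/8) := Real.rpow_nonneg hτ0.le _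
  have e1 : (1 / (β/8)) * ((τ ^ (β/8) / (β/8)) * (τ ^ (β/2) / (β/2)))
      = ((8/β) * (8/β) * (2/β) * τ ^ (β/2)) * τ ^ (β/8) := by
    field_simp
  rw [e1]
  have hC : (0:ℝ) ≤ (8/β) * (8/β) * (2/β) * τ ^ (β/2) := by positivity
  calc ((8/β) * (8/β) * (2/β) * τ ^ (β/2)) * τ ^ (β/8)
      ≤ ((8/β) * (8/β) * (2/β) * τ ^ (β/2)) * 1 := by
        exact mul_le_mul_of_nonneg_left hτ8 hC
    _ = (8/β) * (8/β) * (2/β) * τ ^ (β/2) := by ring
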